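/- A vector x ∈ ℝⁿ is the mean score sequence of a random Coxeter tournament of type Dₙ on the complete signed graph (no half-edges or loops) if and only if |x| is weakly sub-majorized by ρ = (0, 1, 2, …, n-1). -/

import Mathlib

open Finset

/-- `u` is weakly sub-majorized by `v`. -/
def WeakSubMaj {α β : Type*} [Fintype α] [Fintype β] (u : α → ℝ) (v : β → ℝ) : Prop :=
  ∀ S : Finset α, ∃ T : Finset β, T.card = S.card ∧ ∑ i ∈ S, u i ≤ ∑ j ∈ T, v j

/-- `x` is the mean score sequence of a random Coxeter tournament of type `Dₙ`
on the complete signed graph on `n` vertices (no half-edges or loops). -/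
def IsMeanScoreSeqD (n : ℕ) (x : Fin n → ℝ) : Prop :=
  ∃ (pm pp : Fin n → Fin n → ℝ),
    (∀ i j, 0 ≤ pm i j ∧ pm i j ≤ 1) ∧
    (∀ i j, i ≠ j → pm i j = 1 - pm j i) ∧
    (∀ i j, 0 ≤ pp i j ∧ pp i j ≤ 1) ∧
    (∀ i j, pp i j = pp j i) ∧
    (∀ i, x i = ∑ j ∈ univ.erase i, (pm i j - 1/2)
              + ∑ j ∈ univ.erase i, (pp i j - 1/2))

set_option linter.unusedSectionVars false

section Aux
variable {α : Type*} [DecidableEq α] [LinearOrder α]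

lemma sum_erase_eq_offDiag (S : Finset α) (F : α → α → ℝ) :
    ∑ i ∈ S, ∑ j ∈ S.erase i, F i j = ∑ p ∈ S.offDiag, F p.1 p.2 := by
  rw [show S.offDiag = (S ×ˢ S).filter (fun a => a.1 ≠ a.2) by ext; simp [and_assoc], Finset.sum_filter, Finset.sum_product]
  refine Finset.sum_congr rfl fun i hi => ?_
  rw [← Finset.sum_filter]
  refine Finset.sum_congr ?_ fun j _ => rfl
  ext j
  simp [Finset.mem_erase, Finset.mem_filter, and_comm, ne_comm]

lemma sum_offDiag_pairs (S : Finset α) (g : α → α → ℝ) :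
    ∑ p ∈ S.offDiag, g p.1 p.2
      = ∑ p ∈ S.offDiag.filter (fun p => p.1 < p.2), (g p.1 p.2 + g p.2 p.1) := by
  rw [← Finset.sum_filter_add_sum_filter_not S.offDiag (fun p => p.1 < p.2), Finset.sum_add_distrib]
  congr 1
  refine Finset.sum_nbij' (fun p => (p.2, p.1)) (fun p => (p.2, p.1)) ?_ ?_ ?_ ?_ ?_
  · rintro ⟨i, j⟩ h
    simp only [Finset.mem_filter, Finset.mem_offDiag] at h ⊢
    obtain ⟨⟨h1, h2, h3⟩, h4⟩ := h
    exact ⟨⟨h2, h1, h3.symm⟩, lt_of_le_of_ne (not_lt.mp h4) h3.symm⟩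
  · rintro ⟨i, j⟩ h
    simp only [Finset.mem_filter, Finset.mem_offDiag] at h ⊢
    obtain ⟨⟨h1, h2, h3⟩, h4⟩ := h
    exact ⟨⟨h2, h1, h3.symm⟩, not_lt.mpr h4.le⟩
  · rintro ⟨i, j⟩ _; rfl
  · rintro ⟨i, j⟩ _; rfl
  · rintro ⟨i, j⟩ _; rfl

lemma card_offDiag_pairs (S : Finset α) :
    2 * (S.offDiag.filter (fun p => p.1 < p.2)).card = S.card * S.card - S.card := by
  have h1 : (S.offDiag.filter (fun p => p.1 < p.2)).card
      + (S.offDiag.filter (fun p => ¬ p.1 < p.2)).card = S.offDiag.card :=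
    Finset.card_filter_add_card_filter_not _
  have h2 : (S.offDiag.filter (fun p => ¬ p.1 < p.2)).card
      = (S.offDiag.filter (fun p => p.1 < p.2)).card := by
    refine Finset.card_nbij' (fun p => (p.2, p.1)) (fun p => (p.2, p.1)) ?_ ?_ ?_ ?_
    · rintro ⟨i, j⟩ h
      simp only [Finset.mem_filter, Finset.mem_coe, Finset.mem_offDiag] at h ⊢
      obtain ⟨⟨h1, h2, h3⟩, h4⟩ := h
      exact ⟨⟨h2, h1, h3.symm⟩, lt_of_le_of_ne (not_lt.mp h4) h3.symm⟩
    · rintro ⟨i, j⟩ h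
      simp only [Finset.mem_filter, Finset.mem_coe, Finset.mem_offDiag] at h ⊢
      obtain ⟨⟨h1, h2, h3⟩, h4⟩ := h
      exact ⟨⟨h2, h1, h3.symm⟩, not_lt.mpr h4.le⟩
    · rintro ⟨i, j⟩ _; rfl
    · rintro ⟨i, j⟩ _; rfl
  rw [Finset.offDiag_card] at h1
  omega

end Aux

lemma sum_Ico_real (m k : ℕ) :
    ∑ j ∈ Finset.Ico m (m + k), (j : ℝ) = k * m + k * (k - 1) / 2 := by
  induction k with
  | zero => simp
  | succ k ih =>
    rw [show m + (k+1) = (m+k) + 1 from rfl, Finset.sum_Ico_succ_top (Nat.le_add_right m k), ih]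
    push_cast
    ring

lemma pair_bound {a b e f : ℝ} (he : e = 1 ∨ e = -1) (hf : f = 1 ∨ f = -1)
    (hs : -1 ≤ a + b) (hs' : a + b ≤ 1) (hd : -1 ≤ a - b) (hd' : a - b ≤ 1) :
    e * a + f * b ≤ 1 := by
  rcases he with rfl | rfl <;> rcases hf with rfl | rfl <;> linarith

lemma single_bound {a e : ℝ} (he : e = 1 ∨ e = -1) (h1 : -1 ≤ a) (h2 : a ≤ 1) :
    e * a ≤ 1 := by
  rcases he with rfl | rfl <;> linarith

lemma forward_dir {n : ℕ} {x : Fin n → ℝ} (h : IsMeanScoreSeqD n x) :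
    WeakSubMaj (fun i => |x i|) (fun i : Fin n => (i : ℝ)) := by
  obtain ⟨pm, pp, hpm01, hpma, hpp01, hpps, hx⟩ := h
  intro S
  set k := S.card with hk
  have hkn : k ≤ n := by simpa using Finset.card_le_univ S
  set T : Finset (Fin n) := Finset.univ.filter (fun j : Fin n => n - k ≤ (j : ℕ)) with hT
  have hmap : T.map Fin.valEmbedding = Finset.Ico (n - k) n := by
    ext m
    simp only [hT, Finset.mem_map, Finset.mem_filter, Finset.mem_univ, true_and, Finset.mem_Ico,
      Fin.valEmbedding_apply]
    constructor
    · rintro ⟨j, hj, rfl⟩; exact ⟨hj, j.isLt⟩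
    · rintro ⟨h1, h2⟩; exact ⟨⟨m, h2⟩, h1, rfl⟩
  have hTcard : T.card = k := by
    have := congrArg Finset.card hmap
    rw [Finset.card_map, Nat.card_Ico] at this
    omega
  refine ⟨T, hTcard, ?_⟩
  have hTsum : ∑ j ∈ T, ((j : Fin n) : ℝ)
      = (k : ℝ) * ((n : ℝ) - k) + (k : ℝ) * ((k : ℝ) - 1) / 2 := by
    have h1 : ∑ j ∈ T, ((j : Fin n) : ℝ) = ∑ m ∈ Finset.Ico (n - k) n, (m : ℝ) := by
      rw [← hmap, Finset.sum_map]
      rfl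
    have h2 := sum_Ico_real (n - k) k
    rw [show (n - k) + k = n by omega] at h2
    rw [h1, h2, Nat.cast_sub hkn]
  -- setup
  set q : Fin n → Fin n → ℝ := fun i j => (pm i j - 1/2) + (pp i j - 1/2) with hq
  set ε : Fin n → ℝ := fun i => if 0 ≤ x i then 1 else -1 with hε
  have hεpm : ∀ i, ε i = 1 ∨ ε i = -1 := fun i => by
    by_cases h : 0 ≤ x i <;> simp [hε, h]
  have habs : ∀ i, |x i| = ε i * x i := by
    intro i; by_cases h : 0 ≤ x i
    · simp [hε, h, abs_of_nonneg h]
    · simp [hε, h, abs_of_neg (lt_of_not_ge h)]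
  have hxq : ∀ i, x i = ∑ j ∈ Finset.univ.erase i, q i j := by
    intro i; rw [hx i, ← Finset.sum_add_distrib]
  have hq1 : ∀ i j, -1 ≤ q i j ∧ q i j ≤ 1 := by
    intro i j
    have h1 := hpm01 i j
    have h2 := hpp01 i j
    constructor <;> simp only [hq] <;> linarith [h1.1, h1.2, h2.1, h2.2]
  have hqsum : ∀ i j, i ≠ j → (-1 ≤ q i j + q j i ∧ q i j + q j i ≤ 1) := by
    intro i j hij
    have h1 := hpma i j hij
    have h2 := hpps i j
    have h3 := hpp01 i j
    constructor <;> simp only [hq] <;> linarith [h3.1, h3.2]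
  have hqdiff : ∀ i j, i ≠ j → (-1 ≤ q i j - q j i ∧ q i j - q j i ≤ 1) := by
    intro i j hij
    have h1 := hpma i j hij
    have h2 := hpps i j
    have h3 := hpm01 i j
    constructor <;> simp only [hq] <;> linarith [h3.1, h3.2]
  -- split the sum
  have hsplit : ∀ i ∈ S, (Finset.univ.erase i : Finset (Fin n)) = (S.erase i) ∪ (Finset.univ \ S) := by
    intro i hi
    ext j
    simp only [Finset.mem_erase, Finset.mem_union, Finset.mem_univ, Finset.mem_sdiff, true_and,
      and_true]
    constructor
    · intro hj
      by_cases hjS : j ∈ S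
      · exact Or.inl ⟨hj, hjS⟩
      · exact Or.inr hjS
    · rintro (⟨hj, _⟩ | hj)
      · exact hj
      · rintro rfl; exact hj hi
  have hdisj : ∀ i : Fin n, Disjoint (S.erase i) (Finset.univ \ S) := by
    intro i
    rw [Finset.disjoint_left]
    intro j hj hj'
    exact (Finset.mem_sdiff.mp hj').2 (Finset.mem_of_mem_erase hj)
  have step1 : ∑ i ∈ S, |x i|
      = (∑ i ∈ S, ∑ j ∈ S.erase i, ε i * q i j)
        + ∑ i ∈ S, ∑ j ∈ Finset.univ \ S, ε i * q i j := by
    rw [← Finset.sum_add_distrib]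
    refine Finset.sum_congr rfl fun i hi => ?_
    rw [habs i, hxq i, Finset.mul_sum, hsplit i hi, Finset.sum_union (hdisj i)]
  -- bound A
  have hA : ∑ i ∈ S, ∑ j ∈ S.erase i, ε i * q i j
      ≤ ((S.offDiag.filter (fun p => p.1 < p.2)).card : ℝ) := by
    rw [sum_erase_eq_offDiag S (fun i j => ε i * q i j),
      sum_offDiag_pairs S (fun i j => ε i * q i j)]
    calc ∑ p ∈ S.offDiag.filter (fun p => p.1 < p.2), (ε p.1 * q p.1 p.2 + ε p.2 * q p.2 p.1)
        ≤ ∑ _p ∈ S.offDiag.filter (fun p => p.1 < p.2), (1 : ℝ) := by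
          refine Finset.sum_le_sum fun p hp => ?_
          have hne : p.1 ≠ p.2 := (Finset.mem_offDiag.mp (Finset.mem_filter.mp hp).1).2.2
          exact pair_bound (hεpm p.1) (hεpm p.2) (hqsum _ _ hne).1 (hqsum _ _ hne).2
            (hqdiff _ _ hne).1 (hqdiff _ _ hne).2
      _ = ((S.offDiag.filter (fun p => p.1 < p.2)).card : ℝ) := by
          rw [Finset.sum_const, nsmul_eq_mul, mul_one]
  -- bound B
  have hB : ∑ i ∈ S, ∑ j ∈ Finset.univ \ S, ε i * q i j ≤ (k : ℝ) * ((n : ℝ) - k) := by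
    have hcard : ((Finset.univ \ S).card : ℝ) = (n : ℝ) - k := by
      rw [Finset.card_sdiff_of_subset (Finset.subset_univ S), Finset.card_univ, Fintype.card_fin,
        Nat.cast_sub hkn]
    calc ∑ i ∈ S, ∑ j ∈ Finset.univ \ S, ε i * q i j
        ≤ ∑ i ∈ S, ∑ _j ∈ Finset.univ \ S, (1 : ℝ) := by
          refine Finset.sum_le_sum fun i _ => Finset.sum_le_sum fun j _ => ?_
          exact single_bound (hεpm i) (hq1 i j).1 (hq1 i j).2
      _ = (k : ℝ) * ((n : ℝ) - k) := by
          simp only [Finset.sum_const, nsmul_eq_mul, mul_one]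
          rw [hcard]
  -- combine
  have hPcard := card_offDiag_pairs S
  have hkk : k ≤ k * k := by
    rcases Nat.eq_zero_or_pos k with h0 | hpos
    · simp [h0]
    · exact Nat.le_mul_of_pos_left k hpos
  have hPreal : ((S.offDiag.filter (fun p => p.1 < p.2)).card : ℝ)
      = ((k : ℝ) * k - k) / 2 := by
    have h : ((2 * (S.offDiag.filter (fun p => p.1 < p.2)).card : ℕ) : ℝ)
        = ((k * k - k : ℕ) : ℝ) := by exact_mod_cast congrArg (fun m : ℕ => (m : ℝ)) hPcard
    push_cast [Nat.cast_sub hkk] at h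
    linarith
  show ∑ i ∈ S, |x i| ≤ ∑ j ∈ T, ((j : Fin n) : ℝ)
  rw [hTsum, step1]
  rw [hPreal] at hA
  linarith

lemma sum_finset_nat_le (n : ℕ) (T : Finset ℕ) (hT : ∀ t ∈ T, t < n) :
    ∑ t ∈ T, t ≤ ∑ j ∈ Finset.Ico (n - T.card) n, j := by
  induction n generalizing T with
  | zero =>
    have : T = ∅ := Finset.eq_empty_iff_forall_notMem.2 fun t ht => absurd (hT t ht) (by omega)
    simp [this]
  | succ n ih =>
    have hcard : T.card ≤ n + 1 := by
      have : T ⊆ Finset.range (n+1) := fun t ht => Finset.mem_range.2 (hT t ht)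
      simpa using Finset.card_le_card this
    by_cases hn : n ∈ T
    · have hT' : ∀ t ∈ T.erase n, t < n := by
        intro t ht
        have := hT t (Finset.mem_of_mem_erase ht)
        have := Finset.ne_of_mem_erase ht
        omega
      have hins : T = insert n (T.erase n) := (Finset.insert_erase hn).symm
      have hcard' : (T.erase n).card = T.card - 1 := Finset.card_erase_of_mem hn
      have hc1 : 0 < T.card := Finset.card_pos.2 ⟨n, hn⟩
      calc ∑ t ∈ T, t = n + ∑ t ∈ T.erase n, t := by
            conv_lhs => rw [hins]
            rw [Finset.sum_insert (Finset.notMem_erase _ _)]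
        _ ≤ n + ∑ j ∈ Finset.Ico (n - (T.card - 1)) n, j := by
            have h := ih _ hT'
            rw [hcard'] at h
            exact Nat.add_le_add_left h _
        _ = ∑ j ∈ Finset.Ico (n - (T.card - 1)) (n+1), j := by
            rw [Finset.sum_Ico_succ_top (by omega)]; omega
        _ = ∑ j ∈ Finset.Ico (n + 1 - T.card) (n+1), j := by
            have he : n - (T.card - 1) = n + 1 - T.card := by omega
            rw [he]
    · have hT' : ∀ t ∈ T, t < n := by
        intro t ht
        have := hT t ht
        rcases Nat.lt_succ_iff_lt_or_eq.mp this with h | h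
        · exact h
        · exact absurd (h ▸ ht) hn
      have hcn : T.card ≤ n := by
        have : T ⊆ Finset.range n := fun t ht => Finset.mem_range.2 (hT' t ht)
        simpa using Finset.card_le_card this
      refine (ih T hT').trans ?_
      rcases Nat.eq_zero_or_pos T.card with h0 | hpos
      · simp [h0]
      have hlt : n - T.card < n + 1 := by omega
      have e1 : ∑ j ∈ Finset.Ico (n - T.card) (n+1), j
          = (n - T.card) + ∑ j ∈ Finset.Ico (n - T.card + 1) (n+1), j := by
        rw [Finset.sum_eq_sum_Ico_succ_bot hlt]
      have e2 : ∑ j ∈ Finset.Ico (n - T.card) (n+1), j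
          = (∑ j ∈ Finset.Ico (n - T.card) n, j) + n := by
        rw [Finset.sum_Ico_succ_top (by omega)]
      have e3 : n + 1 - T.card = n - T.card + 1 := by omega
      rw [e3]
      omega


lemma abel_bound (w z r : ℕ → ℝ) (n : ℕ)
    (hmono : ∀ m, m + 1 ≤ n → w (m+1) ≤ w m)
    (hw0 : ∀ m, m ≤ n → 0 ≤ w m)
    (hpre : ∀ m, m ≤ n → ∑ j ∈ Finset.range m, z j ≤ ∑ j ∈ Finset.range m, r j) :
    ∑ j ∈ Finset.range n, w j * z j ≤ ∑ j ∈ Finset.range n, w j * r j := by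
  have key : ∀ m, m ≤ n → ∑ j ∈ Finset.range m, w j * z j
      + w m * ((∑ j ∈ Finset.range m, r j) - ∑ j ∈ Finset.range m, z j)
      ≤ ∑ j ∈ Finset.range m, w j * r j := by
    intro m
    induction m with
    | zero => simp
    | succ m ihm =>
      intro hm
      have h1 := ihm (by omega)
      have h2 := hmono m hm
      have h3 := hpre (m+1) hm
      have h4 := hw0 (m+1) hm
      rw [Finset.sum_range_succ, Finset.sum_range_succ, Finset.sum_range_succ,
        Finset.sum_range_succ] at *
      have hkey : w (m+1) * ((∑ j ∈ Finset.range m, r j + r m)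
          - (∑ j ∈ Finset.range m, z j + z m))
          ≤ w m * ((∑ j ∈ Finset.range m, r j + r m) - (∑ j ∈ Finset.range m, z j + z m)) :=
        mul_le_mul_of_nonneg_right h2 (by linarith)
      nlinarith [h1]
  have := key n le_rfl
  have h0 := hw0 n le_rfl
  have hp := hpre n le_rfl
  nlinarith [mul_nonneg h0 (sub_nonneg.2 hp)]

lemma max_abs_eq (a b : ℝ) : max |a| |b| = (|a - b| + |a + b|) / 2 := by
  rcases abs_cases a with ⟨h1, h2⟩ | ⟨h1, h2⟩ <;> rcases abs_cases b with ⟨h3, h4⟩ | ⟨h3, h4⟩ <;>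
    rcases abs_cases (a - b) with ⟨h5, h6⟩ | ⟨h5, h6⟩ <;>
    rcases abs_cases (a + b) with ⟨h7, h8⟩ | ⟨h7, h8⟩ <;>
    rcases max_cases |a| |b| with ⟨h9, h10⟩ | ⟨h9, h10⟩ <;> linarith

lemma backward_dir {n : ℕ} {x : Fin n → ℝ}
    (hw : WeakSubMaj (fun i => |x i|) (fun i : Fin n => (i : ℝ))) :
    IsMeanScoreSeqD n x := by
  classical
  by_contra hx
  set Aset : Set (Fin n → ℝ) := {y | IsMeanScoreSeqD n y} with hAset
  -- convexity
  have hconv : Convex ℝ Aset := by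
    rintro y ⟨pm1, pp1, h1a, h1b, h1c, h1d, h1e⟩ z ⟨pm2, pp2, h2a, h2b, h2c, h2d, h2e⟩ s t hs ht hst
    refine ⟨fun i j => s * pm1 i j + t * pm2 i j, fun i j => s * pp1 i j + t * pp2 i j,
      ?_, ?_, ?_, ?_, ?_⟩
    · intro i j
      have a1 := h1a i j; have a2 := h2a i j
      constructor
      · show 0 ≤ s * pm1 i j + t * pm2 i j
        have := add_nonneg (mul_nonneg hs a1.1) (mul_nonneg ht a2.1); linarith
      · show s * pm1 i j + t * pm2 i j ≤ 1
        nlinarith [a1.2, a2.2]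
    · intro i j hij
      show s * pm1 i j + t * pm2 i j = 1 - (s * pm1 j i + t * pm2 j i)
      rw [h1b i j hij, h2b i j hij]; linear_combination hst
    · intro i j
      have a1 := h1c i j; have a2 := h2c i j
      constructor
      · show 0 ≤ s * pp1 i j + t * pp2 i j
        have := add_nonneg (mul_nonneg hs a1.1) (mul_nonneg ht a2.1); linarith
      · show s * pp1 i j + t * pp2 i j ≤ 1
        nlinarith [a1.2, a2.2]
    · intro i j
      show s * pp1 i j + t * pp2 i j = s * pp1 j i + t * pp2 j i
      rw [h1d i j, h2d i j]
    · intro i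
      show (s • y + t • z) i = ∑ j ∈ univ.erase i, (s * pm1 i j + t * pm2 i j - 1/2)
        + ∑ j ∈ univ.erase i, (s * pp1 i j + t * pp2 i j - 1/2)
      have e1 : ∑ j ∈ univ.erase i, (s * pm1 i j + t * pm2 i j - 1/2)
          = s * (∑ j ∈ univ.erase i, (pm1 i j - 1/2))
            + t * (∑ j ∈ univ.erase i, (pm2 i j - 1/2)) := by
        rw [Finset.mul_sum, Finset.mul_sum, ← Finset.sum_add_distrib]
        exact Finset.sum_congr rfl fun j _ => by linear_combination hst / 2
      have e2 : ∑ j ∈ univ.erase i, (s * pp1 i j + t * pp2 i j - 1/2)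
          = s * (∑ j ∈ univ.erase i, (pp1 i j - 1/2))
            + t * (∑ j ∈ univ.erase i, (pp2 i j - 1/2)) := by
        rw [Finset.mul_sum, Finset.mul_sum, ← Finset.sum_add_distrib]
        exact Finset.sum_congr rfl fun j _ => by linear_combination hst / 2
      have hsz : (s • y + t • z) i = s * y i + t * z i := rfl
      rw [hsz, h1e i, h2e i, e1, e2]; ring
  -- closedness
  have hclosed : IsClosed Aset := by
    set Φ : ((Fin n → Fin n → ℝ) × (Fin n → Fin n → ℝ)) → (Fin n → ℝ) :=
      fun p i => ∑ j ∈ univ.erase i, (p.1 i j - 1/2) + ∑ j ∈ univ.erase i, (p.2 i j - 1/2)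
        with hΦdef
    set K : Set ((Fin n → Fin n → ℝ) × (Fin n → Fin n → ℝ)) :=
      {p | (∀ i j, 0 ≤ p.1 i j ∧ p.1 i j ≤ 1) ∧ (∀ i j, i ≠ j → p.1 i j = 1 - p.1 j i) ∧
           (∀ i j, 0 ≤ p.2 i j ∧ p.2 i j ≤ 1) ∧ (∀ i j, p.2 i j = p.2 j i)} with hKdef
    have hAK : Aset = Φ '' K := by
      ext y
      constructor
      · rintro ⟨pm, pp, h1, h2, h3, h4, h5⟩
        exact ⟨(pm, pp), ⟨h1, h2, h3, h4⟩, funext fun i => (h5 i).symm⟩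
      · rintro ⟨⟨pm, pp⟩, ⟨h1, h2, h3, h4⟩, rfl⟩
        exact ⟨pm, pp, h1, h2, h3, h4, fun i => rfl⟩
    have hc1 : ∀ (i j : Fin n), Continuous fun p : (Fin n → Fin n → ℝ) × (Fin n → Fin n → ℝ) =>
        p.1 i j := fun i j => (continuous_apply j).comp ((continuous_apply i).comp continuous_fst)
    have hc2 : ∀ (i j : Fin n), Continuous fun p : (Fin n → Fin n → ℝ) × (Fin n → Fin n → ℝ) =>
        p.2 i j := fun i j => (continuous_apply j).comp ((continuous_apply i).comp continuous_snd)
    have hKclosed : IsClosed K := by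
      rw [hKdef]
      simp only [Set.setOf_and]
      refine IsClosed.inter ?_ (IsClosed.inter ?_ (IsClosed.inter ?_ ?_))
      · rw [Set.setOf_forall]
        refine isClosed_iInter fun i => ?_
        rw [Set.setOf_forall]
        refine isClosed_iInter fun j => ?_
        rw [Set.setOf_and]
        exact (isClosed_le continuous_const (hc1 i j)).inter
          (isClosed_le (hc1 i j) continuous_const)
      · rw [Set.setOf_forall]
        refine isClosed_iInter fun i => ?_
        rw [Set.setOf_forall]
        refine isClosed_iInter fun j => ?_
        rcases eq_or_ne i j with h | h
        · have : {p : (Fin n → Fin n → ℝ) × (Fin n → Fin n → ℝ) |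
              i ≠ j → p.1 i j = 1 - p.1 j i} = Set.univ := by
            ext p; simp [h]
          rw [this]; exact isClosed_univ
        · have : {p : (Fin n → Fin n → ℝ) × (Fin n → Fin n → ℝ) |
              i ≠ j → p.1 i j = 1 - p.1 j i}
              = {p | p.1 i j = 1 - p.1 j i} := by
            ext p; simp [h]
          rw [this]
          exact isClosed_eq (hc1 i j) (continuous_const.sub (hc1 j i))
      · rw [Set.setOf_forall]
        refine isClosed_iInter fun i => ?_
        rw [Set.setOf_forall]
        refine isClosed_iInter fun j => ?_
        rw [Set.setOf_and]
        exact (isClosed_le continuous_const (hc2 i j)).inter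
          (isClosed_le (hc2 i j) continuous_const)
      · rw [Set.setOf_forall]
        refine isClosed_iInter fun i => ?_
        rw [Set.setOf_forall]
        refine isClosed_iInter fun j => ?_
        exact isClosed_eq (hc2 i j) (hc2 j i)
    have hKcompact : IsCompact K := by
      have hbig : IsCompact ((Set.univ.pi fun _ : Fin n => Set.univ.pi fun _ : Fin n =>
          Set.Icc (0:ℝ) 1) ×ˢ (Set.univ.pi fun _ : Fin n => Set.univ.pi fun _ : Fin n =>
          Set.Icc (0:ℝ) 1)) :=
        ((isCompact_univ_pi fun _ => isCompact_univ_pi fun _ => isCompact_Icc).prod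
          (isCompact_univ_pi fun _ => isCompact_univ_pi fun _ => isCompact_Icc))
      refine IsCompact.of_isClosed_subset hbig hKclosed ?_
      · rintro p ⟨h1, _, h3, _⟩
        refine ⟨?_, ?_⟩
        · rw [Set.mem_univ_pi]
          intro i
          rw [Set.mem_univ_pi]
          intro j
          exact ⟨(h1 i j).1, (h1 i j).2⟩
        · rw [Set.mem_univ_pi]
          intro i
          rw [Set.mem_univ_pi]
          intro j
          exact ⟨(h3 i j).1, (h3 i j).2⟩
    have hΦcont : Continuous Φ := by
      refine continuous_pi fun i => Continuous.add ?_ ?_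
      · exact continuous_finset_sum _ fun j _ => (hc1 i j).sub continuous_const
      · exact continuous_finset_sum _ fun j _ => (hc2 i j).sub continuous_const
    rw [hAK]
    exact (hKcompact.image hΦcont).isClosed
  obtain ⟨f, c, hfa, hfx⟩ := geometric_hahn_banach_closed_point hconv hclosed hx
  set u : Fin n → ℝ := fun i => f (fun j => if i = j then (1:ℝ) else 0) with hu
  have hf : ∀ y : Fin n → ℝ, f y = ∑ i, y i * u i := by
    intro y
    conv_lhs => rw [pi_eq_sum_univ y]
    rw [map_sum]
    exact Finset.sum_congr rfl fun i _ => by rw [map_smul, smul_eq_mul]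
  -- the extreme tournament adapted to u
  set pm : Fin n → Fin n → ℝ :=
    fun i j => if u j < u i ∨ (u j = u i ∧ j < i) then 1 else 0 with hpm
  set pp : Fin n → Fin n → ℝ := fun i j => if 0 ≤ u i + u j then 1 else 0 with hpp
  set a : Fin n → ℝ := fun i => ∑ j ∈ univ.erase i, (pm i j - 1/2)
    + ∑ j ∈ univ.erase i, (pp i j - 1/2) with hadef
  have hpm01 : ∀ i j, 0 ≤ pm i j ∧ pm i j ≤ 1 := by
    intro i j
    by_cases h : u j < u i ∨ (u j = u i ∧ j < i) <;> simp [hpm, h]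
  have hpp01 : ∀ i j, 0 ≤ pp i j ∧ pp i j ≤ 1 := by
    intro i j
    by_cases h : 0 ≤ u i + u j <;> simp [hpp, h]
  have hpmanti : ∀ i j : Fin n, i ≠ j → pm i j = 1 - pm j i := by
    intro i j hij
    show (if u j < u i ∨ (u j = u i ∧ j < i) then (1:ℝ) else 0)
      = 1 - (if u i < u j ∨ (u i = u j ∧ i < j) then (1:ℝ) else 0)
    by_cases h1 : u j < u i
    · have hni : ¬(u i < u j ∨ (u i = u j ∧ i < j)) := by
        rintro (h | ⟨he, _⟩)
        · exact absurd h1 (asymm h)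
        · exact absurd h1 (by rw [he]; exact lt_irrefl _)
      rw [if_pos (Or.inl h1), if_neg hni]; norm_num
    · by_cases h2 : u i < u j
      · have hni : ¬(u j < u i ∨ (u j = u i ∧ j < i)) := by
          rintro (h | ⟨he, _⟩)
          · exact absurd h2 (asymm h)
          · exact absurd h2 (by rw [he]; exact lt_irrefl _)
        rw [if_neg hni, if_pos (Or.inl h2)]; norm_num
      · have he : u i = u j := le_antisymm (not_lt.mp h1) (not_lt.mp h2)
        rcases lt_or_gt_of_ne hij with hlt | hgt
        · have hni : ¬(u j < u i ∨ (u j = u i ∧ j < i)) := by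
            rintro (h | ⟨_, h⟩)
            · exact absurd h h1
            · exact absurd hlt (asymm h)
          rw [if_neg hni, if_pos (Or.inr ⟨he, hlt⟩)]; norm_num
        · have hni : ¬(u i < u j ∨ (u i = u j ∧ i < j)) := by
            rintro (h | ⟨_, h⟩)
            · exact absurd h h2
            · exact absurd hgt (asymm h)
          rw [if_pos (Or.inr ⟨he.symm, hgt⟩), if_neg hni]; norm_num
  have hpps : ∀ i j, pp i j = pp j i := by
    intro i j
    show (if 0 ≤ u i + u j then (1:ℝ) else 0) = (if 0 ≤ u j + u i then (1:ℝ) else 0)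
    rw [add_comm]
  have haA : a ∈ Aset := ⟨pm, pp, hpm01, hpmanti, hpp01, hpps, fun i => rfl⟩
  -- the pair identity
  have hq_pair : ∀ i j : Fin n, i ≠ j →
      u i * ((pm i j - 1/2) + (pp i j - 1/2)) + u j * ((pm j i - 1/2) + (pp j i - 1/2))
        = max |u i| |u j| := by
    intro i j hij
    rw [hpmanti j i hij.symm, hpps j i, max_abs_eq]
    show u i * ((if u j < u i ∨ (u j = u i ∧ j < i) then (1:ℝ) else 0) - 1/2
        + ((if 0 ≤ u i + u j then (1:ℝ) else 0) - 1/2))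
      + u j * (1 - (if u j < u i ∨ (u j = u i ∧ j < i) then (1:ℝ) else 0) - 1/2
        + ((if 0 ≤ u i + u j then (1:ℝ) else 0) - 1/2))
      = (|u i - u j| + |u i + u j|) / 2
    by_cases h1 : u j < u i ∨ (u j = u i ∧ j < i) <;> by_cases h2 : 0 ≤ u i + u j
    · have hji : u j ≤ u i := by rcases h1 with h | ⟨h, _⟩; exacts [h.le, h.le]
      rw [if_pos h1, if_pos h2, abs_of_nonneg (by linarith : (0:ℝ) ≤ u i - u j),
        abs_of_nonneg h2]
      ring
    · have hji : u j ≤ u i := by rcases h1 with h | ⟨h, _⟩; exacts [h.le, h.le]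
      rw [if_pos h1, if_neg h2, abs_of_nonneg (by linarith : (0:ℝ) ≤ u i - u j),
        abs_of_neg (lt_of_not_ge h2)]
      ring
    · have hij' : u i ≤ u j := by
        rcases not_or.mp h1 with ⟨h, _⟩; exact not_lt.mp h
      rw [if_neg h1, if_pos h2, abs_of_nonpos (by linarith : u i - u j ≤ 0),
        abs_of_nonneg h2]
      ring
    · have hij' : u i ≤ u j := by
        rcases not_or.mp h1 with ⟨h, _⟩; exact not_lt.mp h
      rw [if_neg h1, if_neg h2, abs_of_nonpos (by linarith : u i - u j ≤ 0),
        abs_of_neg (lt_of_not_ge h2)]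
      ring
  -- sorting
  set σ : Equiv.Perm (Fin n) := Tuple.sort (fun i => -|u i|) with hσ
  have hsorted : Monotone ((fun i => -|u i|) ∘ σ) := Tuple.monotone_sort _
  set W : ℕ → ℝ := fun m => if h : m < n then |u (σ ⟨m, h⟩)| else 0 with hW
  set Z : ℕ → ℝ := fun m => if h : m < n then |x (σ ⟨m, h⟩)| else 0 with hZ
  set R : ℕ → ℝ := fun m => (n : ℝ) - 1 - m with hR
  have hmono : ∀ m, m + 1 ≤ n → W (m+1) ≤ W m := by
    intro m hm
    have hmn : m < n := by omega
    show (if h' : m + 1 < n then |u (σ ⟨m+1, h'⟩)| else 0)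
      ≤ if h' : m < n then |u (σ ⟨m, h'⟩)| else 0
    by_cases h : m + 1 < n
    · rw [dif_pos h, dif_pos hmn]
      have := hsorted (show (⟨m, hmn⟩ : Fin n) ≤ ⟨m+1, h⟩ from by
        rw [Fin.mk_le_mk]; omega)
      simp only [Function.comp_apply] at this
      linarith
    · rw [dif_neg h, dif_pos hmn]
      exact abs_nonneg _
  have hW0 : ∀ m, m ≤ n → 0 ≤ W m := by
    intro m _
    show 0 ≤ if h : m < n then |u (σ ⟨m, h⟩)| else 0
    by_cases h : m < n
    · rw [dif_pos h]; exact abs_nonneg _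
    · rw [dif_neg h]
  have hpre : ∀ m, m ≤ n → ∑ j ∈ Finset.range m, Z j ≤ ∑ j ∈ Finset.range m, R j := by
    intro m hm
    set Sm : Finset (Fin n) := (univ.filter (fun k : Fin n => (k : ℕ) < m)).image σ with hSmdef
    have hfiltermap : (univ.filter (fun k : Fin n => (k : ℕ) < m)).map Fin.valEmbedding
        = Finset.range m := by
      ext t
      simp only [Finset.mem_map, Finset.mem_filter, Finset.mem_univ, true_and,
        Finset.mem_range, Fin.valEmbedding_apply]
      constructor
      · rintro ⟨k, hk, rfl⟩; exact hk
      · intro ht; exact ⟨⟨t, lt_of_lt_of_le ht hm⟩, ht, rfl⟩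
    have hfcard : (univ.filter (fun k : Fin n => (k : ℕ) < m)).card = m := by
      have := congrArg Finset.card hfiltermap
      rwa [Finset.card_map, Finset.card_range] at this
    have hSmcard : Sm.card = m := by
      rw [hSmdef, Finset.card_image_of_injective _ σ.injective, hfcard]
    have hSmsum : ∑ i ∈ Sm, |x i| = ∑ j ∈ Finset.range m, Z j := by
      rw [hSmdef, Finset.sum_image (fun k _ l _ h => σ.injective h)]
      refine Finset.sum_bij' (fun (k : Fin n) (_ : k ∈ univ.filter (fun k : Fin n => (k : ℕ) < m)) => (k : ℕ))
        (fun t ht => (⟨t, lt_of_lt_of_le (Finset.mem_range.mp ht) hm⟩ : Fin n)) ?_ ?_ ?_ ?_ ?_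
      · intro k hk; exact Finset.mem_range.mpr (Finset.mem_filter.mp hk).2
      · intro t ht; exact Finset.mem_filter.mpr ⟨Finset.mem_univ _, Finset.mem_range.mp ht⟩
      · intro k _; exact Fin.eta k k.isLt
      · intro t _; rfl
      · intro k hk
        show |x (σ k)| = Z (k : ℕ)
        rw [hZ]
        simp [k.isLt]
    obtain ⟨T, hTc, hTs⟩ := hw Sm
    have hTs' : ∑ i ∈ Sm, |x i| ≤ ∑ j ∈ T, ((j : Fin n) : ℝ) := hTs
    have hTn : ∀ t ∈ T.map Fin.valEmbedding, t < n := by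
      intro t ht
      obtain ⟨j, _, rfl⟩ := Finset.mem_map.mp ht
      exact j.isLt
    have hTmc : (T.map Fin.valEmbedding).card = m := by rw [Finset.card_map, hTc, hSmcard]
    have h2 := sum_finset_nat_le n (T.map Fin.valEmbedding) hTn
    rw [hTmc] at h2
    have h1 : ∑ j ∈ T, ((j : Fin n) : ℝ) = ((∑ t ∈ T.map Fin.valEmbedding, t : ℕ) : ℝ) := by
      rw [Finset.sum_map, Nat.cast_sum]
      rfl
    have h3 : ((∑ j ∈ Finset.Ico (n - m) n, j : ℕ) : ℝ)
        = m * ((n : ℝ) - m) + m * ((m : ℝ) - 1) / 2 := by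
      rw [Nat.cast_sum]
      have h := sum_Ico_real (n - m) m
      rw [show n - m + m = n by omega] at h
      rw [h, Nat.cast_sub hm]
    have hid : ∑ j ∈ Finset.range m, (j : ℝ) = m * ((m : ℝ) - 1) / 2 := by
      have h := sum_Ico_real 0 m
      rw [zero_add] at h
      rw [Finset.range_eq_Ico, h]
      push_cast
      ring
    have h4 : ∑ j ∈ Finset.range m, R j = m * ((n : ℝ) - 1) - m * ((m : ℝ) - 1) / 2 := by
      calc ∑ j ∈ Finset.range m, R j
          = ∑ j ∈ Finset.range m, (((n : ℝ) - 1) - (j : ℝ)) := rfl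
        _ = (m : ℝ) * ((n : ℝ) - 1) - ∑ j ∈ Finset.range m, (j : ℝ) := by
            rw [Finset.sum_sub_distrib, Finset.sum_const, Finset.card_range, nsmul_eq_mul]
        _ = m * ((n : ℝ) - 1) - m * ((m : ℝ) - 1) / 2 := by rw [hid]
    have hcast : ((∑ t ∈ T.map Fin.valEmbedding, t : ℕ) : ℝ)
        ≤ ((∑ j ∈ Finset.Ico (n - m) n, j : ℕ) : ℝ) := Nat.cast_le.mpr h2
    have hfin : m * ((n : ℝ) - m) + m * ((m : ℝ) - 1) / 2
        = m * ((n : ℝ) - 1) - m * ((m : ℝ) - 1) / 2 := by ring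
    rw [← hSmsum, h4]
    rw [h1] at hTs'
    linarith
  have sB := abel_bound W Z R n hmono hW0 hpre
  -- computing ∑ a i * u i
  have haeq : ∑ i, a i * u i
      = ∑ p ∈ (univ : Finset (Fin n)).offDiag.filter (fun p : Fin n × Fin n => p.1 < p.2),
          max |u (σ p.1)| |u (σ p.2)| := by
    have t1 : ∑ i, a i * u i
        = ∑ i, ∑ j ∈ univ.erase i, u i * ((pm i j - 1/2) + (pp i j - 1/2)) := by
      refine Finset.sum_congr rfl fun i _ => ?_
      show (∑ j ∈ univ.erase i, (pm i j - 1/2) + ∑ j ∈ univ.erase i, (pp i j - 1/2)) * u i = _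
      rw [← Finset.sum_add_distrib, Finset.sum_mul]
      exact Finset.sum_congr rfl fun j _ => by ring
    have t2 : ∑ i, ∑ j ∈ univ.erase i, u i * ((pm i j - 1/2) + (pp i j - 1/2))
        = ∑ p ∈ (univ : Finset (Fin n)).offDiag,
            u p.1 * ((pm p.1 p.2 - 1/2) + (pp p.1 p.2 - 1/2)) :=
      sum_erase_eq_offDiag univ (fun i j => u i * ((pm i j - 1/2) + (pp i j - 1/2)))
    have t3 : ∑ p ∈ (univ : Finset (Fin n)).offDiag,
          u p.1 * ((pm p.1 p.2 - 1/2) + (pp p.1 p.2 - 1/2))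
        = ∑ p ∈ (univ : Finset (Fin n)).offDiag,
          u (σ p.1) * ((pm (σ p.1) (σ p.2) - 1/2) + (pp (σ p.1) (σ p.2) - 1/2)) := by
      refine (Finset.sum_equiv (Equiv.prodCongr σ σ) ?_ fun p _ => rfl).symm
      intro p
      simp only [Finset.mem_offDiag, Finset.mem_univ, true_and, Equiv.prodCongr_apply,
        Prod.map_fst, Prod.map_snd, ne_eq, EmbeddingLike.apply_eq_iff_eq]
    have t4 := sum_offDiag_pairs (univ : Finset (Fin n))
        (fun k l => u (σ k) * ((pm (σ k) (σ l) - 1/2) + (pp (σ k) (σ l) - 1/2)))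
    rw [t1, t2, t3, t4]
    refine Finset.sum_congr rfl fun p hp => ?_
    have hne : p.1 ≠ p.2 := (Finset.mem_offDiag.mp (Finset.mem_filter.mp hp).1).2.2
    exact hq_pair (σ p.1) (σ p.2) (fun he => hne (σ.injective he))
  have hlow : ∑ p ∈ (univ : Finset (Fin n)).offDiag.filter (fun p : Fin n × Fin n => p.1 < p.2),
        |u (σ p.1)| ≤ ∑ i, a i * u i := by
    rw [haeq]
    exact Finset.sum_le_sum fun p _ => le_max_left _ _
  have hWR1 : ∑ p ∈ (univ : Finset (Fin n)).offDiag.filter (fun p : Fin n × Fin n => p.1 < p.2),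
        |u (σ p.1)| = ∑ k : Fin n, ((n : ℝ) - 1 - (k : ℕ)) * |u (σ k)| := by
    have e0 : ((univ : Finset (Fin n)).offDiag.filter (fun p : Fin n × Fin n => p.1 < p.2))
        = ((univ : Finset (Fin n)) ×ˢ (univ : Finset (Fin n))).filter
            (fun p : Fin n × Fin n => p.1 < p.2) := by
      ext p
      simp only [Finset.mem_filter, Finset.mem_offDiag, Finset.mem_product, Finset.mem_univ,
        true_and]
      exact ⟨fun h => h.2, fun h => ⟨ne_of_lt h, h⟩⟩
    rw [e0, Finset.sum_filter, Finset.sum_product]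
    refine Finset.sum_congr rfl fun k _ => ?_
    rw [← Finset.sum_filter]
    have hIoi : (univ.filter (fun l : Fin n => k < l)) = Finset.Ioi k := by
      ext l; simp [Finset.mem_Ioi]
    rw [hIoi]
    rw [show (∑ l ∈ Finset.Ioi k, |u (σ (k, l).1)|) = ∑ _l ∈ Finset.Ioi k, |u (σ k)| from rfl]
    rw [Finset.sum_const, Fin.card_Ioi, nsmul_eq_mul]
    have hk := k.isLt
    have hcast : ((n - 1 - (k : ℕ) : ℕ) : ℝ) = (n : ℝ) - 1 - (k : ℕ) := by
      rw [Nat.cast_sub (by omega), Nat.cast_sub (by omega)]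
      push_cast
      ring
    rw [hcast]
  have hWR2 : ∑ j ∈ Finset.range n, W j * R j
      = ∑ k : Fin n, ((n : ℝ) - 1 - (k : ℕ)) * |u (σ k)| := by
    rw [← Fin.sum_univ_eq_sum_range (fun j => W j * R j) n]
    refine Finset.sum_congr rfl fun k _ => ?_
    show W (k : ℕ) * R (k : ℕ) = _
    rw [hW, hR]
    simp only [k.isLt, dif_pos, Fin.eta]
    ring
  have sA : ∑ i, x i * u i ≤ ∑ j ∈ Finset.range n, W j * Z j := by
    have e1 : ∑ j ∈ Finset.range n, W j * Z j = ∑ k : Fin n, |u (σ k)| * |x (σ k)| := by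
      rw [← Fin.sum_univ_eq_sum_range (fun j => W j * Z j) n]
      refine Finset.sum_congr rfl fun k _ => ?_
      show W (k : ℕ) * Z (k : ℕ) = _
      rw [hW, hZ]
      simp [k.isLt]
    have e2 : ∑ k : Fin n, |u (σ k)| * |x (σ k)| = ∑ i : Fin n, |u i| * |x i| :=
      Equiv.sum_comp σ (fun i => |u i| * |x i|)
    rw [e1, e2]
    refine Finset.sum_le_sum fun i _ => ?_
    calc x i * u i ≤ |x i * u i| := le_abs_self _
      _ = |u i| * |x i| := by rw [abs_mul, mul_comm]
  have hfx2 : f x = ∑ i, x i * u i := hf x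
  have hfa2 : f a = ∑ i, a i * u i := hf a
  have hchain : f x ≤ f a := by
    rw [hfx2, hfa2]
    calc ∑ i, x i * u i ≤ ∑ j ∈ Finset.range n, W j * Z j := sA
      _ ≤ ∑ j ∈ Finset.range n, W j * R j := sB
      _ = ∑ k : Fin n, ((n : ℝ) - 1 - (k : ℕ)) * |u (σ k)| := hWR2
      _ = ∑ p ∈ (univ : Finset (Fin n)).offDiag.filter (fun p : Fin n × Fin n => p.1 < p.2),
            |u (σ p.1)| := hWR1.symm
      _ ≤ ∑ i, a i * u i := hlow
  have hfaa := hfa a haA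
  linarith

theorem meanScoreSeqD_iff_weakSubMaj (n : ℕ) (x : Fin n → ℝ) :
    IsMeanScoreSeqD n x ↔
      WeakSubMaj (fun i => |x i|) (fun i : Fin n => (i : ℝ)) :=
  ⟨forward_dir, backward_dir⟩
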